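/- Let n ≥ 1, ζ ≥ 1, and let g_μ(x) = ⟨w_μ, x⟩ + b_μ (μ = 1,…,ζ) be affine functionals on ℝⁿ with w_μ ≠ 0. Let R_1,…,R_ζ ⊆ [0,1]ⁿ be nonempty sets such that: (i) for every ν = 2,…,ζ and every j < ν, R_j ⊆ {x : g_ν(x) ≤ 0}; (ii) for every i and every μ ≤ i, R_i ⊆ {x : g_μ(x) ≥ 0}. Let s_1,…,s_ζ be affine functions with s_ν = s_{ν−1} on {x : g_ν(x) = 0} for ν = 2,…,ζ. Then for every subset T ⊆ {2,…,ζ} there exist affine functionals h_k (k = 1,…,n+1) with h_k(x) > 0 for all x ∈ [0,1]ⁿ, and coefficients μ_k (k = 1,…,n+1) and λ_ν (ν = 2,…,ζ), such that for every i and every x ∈ R_i, s_i(x) = Σ_{k=1}^{n+1} μ_k·max(0, h_k(x)) + Σ_{ν∈T} λ_ν·max(0, −g_ν(x)) + Σ_{ν∉T, 2≤ν≤ζ} λ_ν·max(0, g_ν(x)). That is, the spline is realized by a two-layer ReLU network with ζ+n hidden units in which the units of the knots in T carry the negative orientation (substituted two-sided bases). -/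

import Mathlib

open Set

/-- An affine function on `ℝⁿ`, i.e. `x ↦ ⟨a, x⟩ + c`. -/
def IsAffineFn {n : ℕ} (s : (Fin n → ℝ) → ℝ) : Prop :=
  ∃ (a : Fin n → ℝ) (c : ℝ), ∀ x, s x = (∑ i, a i * x i) + c

lemma sum_mul_single' {n : ℕ} (w : Fin n → ℝ) (t : Fin n) (v : ℝ) :
    ∑ u, w u * (Pi.single t v : Fin n → ℝ) u = w t * v := by
  rw [Finset.sum_eq_single t]
  · simp
  · intro u _ hu; simp [Pi.single_apply, hu]
  · simp

lemma single_mul_sum' {n : ℕ} (w : Fin n → ℝ) (t : Fin n) (v : ℝ) :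
    ∑ u, (Pi.single t v : Fin n → ℝ) u * w u = v * w t := by
  rw [Finset.sum_eq_single t]
  · simp
  · intro u _ hu; simp [Pi.single_apply, hu]
  · simp

lemma affine_factor {n : ℕ} (w : Fin n → ℝ) (b : ℝ) (hw : w ≠ 0)
    (d : (Fin n → ℝ) → ℝ) (hd : IsAffineFn d)
    (h0 : ∀ x, (∑ t, w t * x t) + b = 0 → d x = 0) :
    ∃ l : ℝ, ∀ x, d x = l * ((∑ t, w t * x t) + b) := by
  obtain ⟨a, c, ha⟩ := hd
  obtain ⟨t0, ht0⟩ : ∃ t, w t ≠ 0 := Function.ne_iff.mp hw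
  refine ⟨a t0 / w t0, ?_⟩
  have hc : c = a t0 / w t0 * b := by
    have hx0 : (∑ t, w t * (Pi.single t0 (-b / w t0) : Fin n → ℝ) t) + b = 0 := by
      rw [sum_mul_single']; field_simp; ring
    have h := h0 _ hx0
    rw [ha, sum_mul_single'] at h
    field_simp at h ⊢
    linarith
  have hat : ∀ t, a t = a t0 / w t0 * w t := by
    intro t
    by_cases htt : t = t0
    · subst htt; field_simp
    · set A := (-b - w t) / w t0 with hA
      have hx1g : (∑ u, w u * ((Pi.single t 1 : Fin n → ℝ) + (Pi.single t0 A : Fin n → ℝ)) u) + b = 0 := by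
        simp only [Pi.add_apply, mul_add, Finset.sum_add_distrib, sum_mul_single']
        rw [hA]; field_simp; ring
      have hd1 := h0 _ hx1g
      rw [ha] at hd1
      simp only [Pi.add_apply, mul_add, Finset.sum_add_distrib, sum_mul_single'] at hd1
      rw [hA, hc] at hd1
      field_simp at hd1 ⊢
      linarith
  intro x
  rw [ha, hc]
  have : ∀ t : Fin n, a t * x t = a t0 / w t0 * (w t * x t) := by
    intro t; rw [hat t]; ring
  rw [Finset.sum_congr rfl (fun t _ => this t), ← Finset.mul_sum]
  ring

lemma tele' (f : ℕ → ℝ) : ∀ i, 1 ≤ i → ∑ ν ∈ Finset.Icc 2 i, (f ν - f (ν - 1)) = f i - f 1 := by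
  intro i hi
  induction i, hi using Nat.le_induction with
  | base => simp
  | succ i hi ih =>
    rw [Finset.sum_Icc_succ_top (by omega), ih]
    have : i + 1 - 1 = i := by omega
    rw [this]; ring

lemma max_neg' (y : ℝ) : max 0 (-y) = max 0 y - y := by
  rcases le_total y 0 with h | h
  · rw [max_eq_right (by linarith), max_eq_left (by linarith)]; ring
  · rw [max_eq_left (by linarith), max_eq_right h]; ring


/-- Substituted two-sided bases: a continuous linear spline
over ordered regions `R₁,…,R_ζ ⊆ [0,1]ⁿ` is realized by a two-layer ReLU
network with `ζ + n` hidden units in which the local units at any chosen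
subset `T` of the knots carry the negative orientation, the remaining local
units the positive one, and `n + 1` global units are positive on `[0,1]ⁿ`. -/
theorem spline_substituted_two_sided_bases
    (n ζ : ℕ) (hn : 1 ≤ n) (hζ : 1 ≤ ζ)
    (w : ℕ → Fin n → ℝ) (b : ℕ → ℝ)
    (hw : ∀ μ, 1 ≤ μ → μ ≤ ζ → w μ ≠ 0)
    (R : ℕ → Set (Fin n → ℝ))
    (hRne : ∀ i, 1 ≤ i → i ≤ ζ → (R i).Nonempty)
    (hRsub : ∀ i, 1 ≤ i → i ≤ ζ → R i ⊆ Icc (0 : Fin n → ℝ) 1)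
    (hzero : ∀ ν, 2 ≤ ν → ν ≤ ζ → ∀ j, 1 ≤ j → j < ν →
      ∀ x ∈ R j, (∑ t, w ν t * x t) + b ν ≤ 0)
    (hpos : ∀ i, 1 ≤ i → i ≤ ζ → ∀ μ, 1 ≤ μ → μ ≤ i →
      ∀ x ∈ R i, 0 ≤ (∑ t, w μ t * x t) + b μ)
    (s : ℕ → (Fin n → ℝ) → ℝ)
    (hsa : ∀ i, 1 ≤ i → i ≤ ζ → IsAffineFn (s i))
    (hcont : ∀ ν, 2 ≤ ν → ν ≤ ζ → ∀ x, (∑ t, w ν t * x t) + b ν = 0 →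
      s ν x = s (ν - 1) x)
    (T : Finset ℕ) (hT : ∀ ν ∈ T, 2 ≤ ν ∧ ν ≤ ζ) :
    ∃ (A : Fin (n + 1) → Fin n → ℝ) (cA mu : Fin (n + 1) → ℝ) (lam : ℕ → ℝ),
      (∀ k, ∀ x ∈ Icc (0 : Fin n → ℝ) 1, 0 < (∑ t, A k t * x t) + cA k) ∧
      ∀ i, 1 ≤ i → i ≤ ζ → ∀ x ∈ R i,
        s i x = (∑ k, mu k * max 0 ((∑ t, A k t * x t) + cA k)) +
          (∑ ν ∈ T, lam ν * max 0 (-((∑ t, w ν t * x t) + b ν))) +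
          (∑ ν ∈ Finset.Icc 2 ζ \ T, lam ν * max 0 ((∑ t, w ν t * x t) + b ν)) := by
  classical
  have key : ∀ ν, 2 ≤ ν → ν ≤ ζ →
      ∃ l : ℝ, ∀ x, s ν x - s (ν - 1) x = l * ((∑ t, w ν t * x t) + b ν) := by
    intro ν h2 hν
    have hd : IsAffineFn (fun x => s ν x - s (ν - 1) x) := by
      obtain ⟨a1, c1, h1⟩ := hsa ν (by omega) hν
      obtain ⟨a2, c2, h2'⟩ := hsa (ν - 1) (by omega) (by omega)
      refine ⟨fun t => a1 t - a2 t, c1 - c2, fun x => ?_⟩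
      simp only [h1, h2', sub_mul, Finset.sum_sub_distrib]
      ring
    obtain ⟨l, hl⟩ := affine_factor (w ν) (b ν) (hw ν (by omega) hν) _ hd
      (fun x hx => by rw [hcont ν h2 hν x hx]; ring)
    exact ⟨l, hl⟩
  choose! lam0 hlam0 using key
  obtain ⟨a1, c1, hs1⟩ := hsa 1 le_rfl hζ
  set a : Fin n → ℝ := fun t => a1 t + ∑ ν ∈ T, lam0 ν * w ν t with ha
  set c : ℝ := c1 + ∑ ν ∈ T, lam0 ν * b ν with hc
  have hp : ∀ x, (∑ t, a t * x t) + c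
      = s 1 x + ∑ ν ∈ T, lam0 ν * ((∑ t, w ν t * x t) + b ν) := by
    intro x
    rw [hs1]
    simp only [ha, hc, add_mul, Finset.sum_add_distrib, mul_add]
    rw [show (∑ t, (∑ ν ∈ T, lam0 ν * w ν t) * x t)
        = ∑ ν ∈ T, lam0 ν * ∑ t, w ν t * x t from by
      simp_rw [Finset.sum_mul, Finset.mul_sum, mul_assoc]; exact Finset.sum_comm]
    ring
  set A : Fin (n + 1) → Fin n → ℝ :=
    Fin.snoc (fun k : Fin n => (Pi.single k 1 : Fin n → ℝ)) 0 with hA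
  set mu : Fin (n + 1) → ℝ := Fin.snoc a (c - ∑ t, a t) with hmu
  have hApos : ∀ k, ∀ x ∈ Icc (0 : Fin n → ℝ) 1, 0 < (∑ t, A k t * x t) + 1 := by
    intro k x hx
    induction k using Fin.lastCases with
    | last => simp [hA]
    | cast j =>
      have h1 : ∀ t, A j.castSucc t = (Pi.single j 1 : Fin n → ℝ) t := by
        intro t; rw [hA, Fin.snoc_castSucc]
      simp only [h1]
      rw [single_mul_sum']
      have hxj : (0 : ℝ) ≤ x j := by
        have := hx.1 j
        simpa using this
      nlinarith
  have hglob : ∀ x ∈ Icc (0 : Fin n → ℝ) 1,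
      (∑ k, mu k * max 0 ((∑ t, A k t * x t) + 1)) = (∑ t, a t * x t) + c := by
    intro x hx
    have hmax : ∀ k, max 0 ((∑ t, A k t * x t) + 1) = (∑ t, A k t * x t) + 1 :=
      fun k => max_eq_right (le_of_lt (hApos k x hx))
    simp_rw [hmax]
    rw [Fin.sum_univ_castSucc]
    simp only [hA, hmu, Fin.snoc_castSucc, Fin.snoc_last, single_mul_sum', Pi.zero_apply,
      zero_mul, Finset.sum_const_zero, zero_add, mul_one, mul_add, Finset.sum_add_distrib,
      one_mul]
    ring
  refine ⟨A, fun _ => 1, mu, lam0, fun k x hx => hApos k x hx, ?_⟩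
  intro i hi1 hiζ x hxR
  have hx : x ∈ Icc (0 : Fin n → ℝ) 1 := hRsub i hi1 hiζ hxR
  have hS : ∑ ν ∈ Finset.Icc 2 ζ, lam0 ν * max 0 ((∑ t, w ν t * x t) + b ν)
      = s i x - s 1 x := by
    rw [← Finset.sum_subset (Finset.Icc_subset_Icc_right hiζ :
        Finset.Icc 2 i ⊆ Finset.Icc 2 ζ) ?_]
    · have hterm : ∀ ν ∈ Finset.Icc 2 i,
          lam0 ν * max 0 ((∑ t, w ν t * x t) + b ν) = s ν x - s (ν - 1) x := by
        intro ν hν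
        rw [Finset.mem_Icc] at hν
        rw [max_eq_right (hpos i hi1 hiζ ν (by omega) hν.2 x hxR)]
        exact (hlam0 ν hν.1 (by omega) x).symm
      rw [Finset.sum_congr rfl hterm, tele' (fun ν => s ν x) i hi1]
    · intro ν hν hν'
      rw [Finset.mem_Icc] at hν
      rw [Finset.mem_Icc] at hν'
      have hle : (∑ t, w ν t * x t) + b ν ≤ 0 :=
        hzero ν hν.1 hν.2 i hi1 (by omega) x hxR
      rw [max_eq_left hle, mul_zero]
  have hTsub : T ⊆ Finset.Icc 2 ζ := fun ν hν => Finset.mem_Icc.mpr (hT ν hν)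
  have h2 := Finset.sum_sdiff (f := fun ν => lam0 ν * max 0 ((∑ t, w ν t * x t) + b ν)) hTsub
  have h1 : ∑ ν ∈ T, lam0 ν * max 0 (-((∑ t, w ν t * x t) + b ν))
      = (∑ ν ∈ T, lam0 ν * max 0 ((∑ t, w ν t * x t) + b ν))
        - ∑ ν ∈ T, lam0 ν * ((∑ t, w ν t * x t) + b ν) := by
    rw [← Finset.sum_sub_distrib]
    exact Finset.sum_congr rfl (fun ν _ => by rw [max_neg', mul_sub])
  have hG := hglob x hx
  have hP := hp x
  calc s i x = ((∑ t, a t * x t) + c)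
        + (∑ ν ∈ T, lam0 ν * max 0 (-((∑ t, w ν t * x t) + b ν)))
        + (∑ ν ∈ Finset.Icc 2 ζ \ T, lam0 ν * max 0 ((∑ t, w ν t * x t) + b ν)) := by
        rw [hP, h1]; linarith [h2, hS]
    _ = _ := by rw [← hG]
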